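/- (Parabolic Hörmander condition) Let 𝔤 be the smallest ℝ-linear subspace of the space of smooth vector fields on ℝ^{1+N} that contains D̄_0, D̄_1, …, D̄_n and is closed under the Lie bracket operation. Then for every point (t, φ) ∈ ℝ × ℝ^N, the set of vectors {W(t, φ) : W ∈ 𝔤} spans all of ℝ^{1+N}. -/

import Mathlib

open scoped BigOperators

noncomputable section

/-- Vector fields on `ℝ^N`. -/
abbrev VF (N : ℕ) := (Fin N → ℝ) → Fin N → ℝ

/-- The Lie bracket `[V,W](φ) = DW(φ)(V(φ)) − DV(φ)(W(φ))` of vector fields. -/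
def lieBracket {N : ℕ} (V W : VF N) : VF N :=
  fun φ => fderiv ℝ W φ (V φ) - fderiv ℝ V φ (W φ)

/-- The drift vector field `D₀`. -/
def Dfield0 {N : ℕ} (lam μ : ℝ) (k : ℕ) : VF N :=
  fun φ i => (lam - (k : ℝ) * μ ^ 2 / 2) * φ i + lam

/-- The diffusion vector fields `D_j`, `1 ≤ j ≤ n`. -/
def DfieldJ {n N : ℕ} (μ : ℝ) (S : Fin N → Finset (Fin n)) (j : Fin n) : VF N :=
  fun φ i => (μ / Real.sqrt 2) * (φ i * if j ∈ S i then 1 else 0)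

/-- Time-extended vector fields on `ℝ × ℝ^N`. -/
abbrev VFt (N : ℕ) := (ℝ × (Fin N → ℝ)) → ℝ × (Fin N → ℝ)

/-- The Lie bracket of time-extended vector fields. -/
def lieBracketT {N : ℕ} (V W : VFt N) : VFt N :=
  fun x => fderiv ℝ W x (V x) - fderiv ℝ V x (W x)

/-- The time-extended drift vector field `D̄₀`. -/
def Dbar0 {N : ℕ} (lam μ : ℝ) (k : ℕ) : VFt N :=
  fun x => (-1, Dfield0 lam μ k x.2)

/-- The time-extended diffusion vector fields `D̄_j`, `1 ≤ j ≤ n`. -/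
def DbarJ {n N : ℕ} (μ : ℝ) (S : Fin N → Finset (Fin n)) (j : Fin n) : VFt N :=
  fun x => (0, DfieldJ μ S j x.2)

def A0clm (N : ℕ) (c : ℝ) : (ℝ × (Fin N → ℝ)) →L[ℝ] (ℝ × (Fin N → ℝ)) :=
  ContinuousLinearMap.prod 0 (c • ContinuousLinearMap.snd ℝ ℝ (Fin N → ℝ))

def Bclm {n : ℕ} (N : ℕ) (μ : ℝ) (S : Fin N → Finset (Fin n)) (j : Fin n) :
    (ℝ × (Fin N → ℝ)) →L[ℝ] (ℝ × (Fin N → ℝ)) :=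
  ContinuousLinearMap.prod 0 (ContinuousLinearMap.pi fun i =>
    ((μ / Real.sqrt 2) * (if j ∈ S i then 1 else 0)) •
      ((ContinuousLinearMap.proj i).comp (ContinuousLinearMap.snd ℝ ℝ (Fin N → ℝ))))

lemma A0clm_apply {N : ℕ} (c : ℝ) (y : ℝ × (Fin N → ℝ)) :
    A0clm N c y = (0, fun i => c * y.2 i) := by
  simp [A0clm]; rfl

lemma Bclm_apply {n N : ℕ} (μ : ℝ) (S : Fin N → Finset (Fin n)) (j : Fin n)
    (y : ℝ × (Fin N → ℝ)) :
    Bclm N μ S j y = (0, fun i => (μ / Real.sqrt 2) * ((if j ∈ S i then 1 else 0) * y.2 i)) := by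
  refine Prod.ext (by simp [Bclm]) (funext fun i => ?_)
  simp only [Bclm, ContinuousLinearMap.prod_apply, ContinuousLinearMap.pi_apply,
    ContinuousLinearMap.smul_apply, ContinuousLinearMap.comp_apply,
    ContinuousLinearMap.proj_apply, ContinuousLinearMap.coe_snd', smul_eq_mul]
  ring

lemma DbarJ_eq {n N : ℕ} (μ : ℝ) (S : Fin N → Finset (Fin n)) (j : Fin n) :
    DbarJ μ S j = ⇑(Bclm N μ S j) := by
  funext x
  rw [Bclm_apply]
  unfold DbarJ DfieldJ
  refine Prod.ext rfl (funext fun i => by ring)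

lemma fderiv_DbarJ {n N : ℕ} (μ : ℝ) (S : Fin N → Finset (Fin n)) (j : Fin n)
    (x : ℝ × (Fin N → ℝ)) :
    fderiv ℝ (DbarJ μ S j) x = Bclm N μ S j := by
  rw [DbarJ_eq]; exact (Bclm N μ S j).fderiv

lemma fderiv_Dbar0 {N : ℕ} (lam μ : ℝ) (k : ℕ) (x : ℝ × (Fin N → ℝ)) :
    fderiv ℝ (Dbar0 lam μ k) x = A0clm N (lam - (k : ℝ) * μ ^ 2 / 2) := by
  have h : Dbar0 (N := N) lam μ k =
      fun y => A0clm N (lam - (k : ℝ) * μ ^ 2 / 2) y + ((-1 : ℝ), fun _ => lam) := by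
    funext y
    rw [A0clm_apply]
    unfold Dbar0 Dfield0
    refine Prod.ext (by simp) (funext fun i => by simp)
  rw [h]
  exact (((A0clm N (lam - (k : ℝ) * μ ^ 2 / 2)).hasFDerivAt (x := x)).add_const _).fderiv

lemma brJ0 {n N : ℕ} (lam μ : ℝ) (k : ℕ) (S : Fin N → Finset (Fin n)) (j : Fin n) :
    lieBracketT (DbarJ μ S j) (Dbar0 lam μ k) =
      fun _ => ((0 : ℝ), fun i => -((μ / Real.sqrt 2) * lam) * (if j ∈ S i then 1 else 0)) := by
  funext x
  unfold lieBracketT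
  rw [fderiv_DbarJ, fderiv_Dbar0, A0clm_apply, Bclm_apply]
  unfold DbarJ DfieldJ Dbar0 Dfield0
  refine Prod.ext (by simp) (funext fun i => ?_)
  simp only [Prod.snd_sub, Pi.sub_apply]
  split_ifs <;> ring

lemma brConstJ {n N : ℕ} (μ : ℝ) (S : Fin N → Finset (Fin n)) (l : Fin n)
    (v : ℝ × (Fin N → ℝ)) :
    lieBracketT (fun _ => v) (DbarJ μ S l) =
      fun _ => ((0 : ℝ), fun i => (μ / Real.sqrt 2) * ((if l ∈ S i then 1 else 0) * v.2 i)) := by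
  funext x
  unfold lieBracketT
  rw [fderiv_DbarJ, Bclm_apply, fderiv_fun_const]
  simp
theorem parabolic_hormander_condition
    (n k N : ℕ) (hk : 1 ≤ k) (hkn : k < n) (hN : N = n.choose k)
    (S : Fin N → Finset (Fin n)) (hSinj : Function.Injective S)
    (hScard : ∀ i, (S i).card = k)
    (μ lam : ℝ) (hμ : μ ≠ 0) (hlam : 0 < lam) :
    ∀ x : ℝ × (Fin N → ℝ),
      Submodule.span ℝ ((fun W : VFt N => W x) ''
        (⋂₀ {G : Set (VFt N) |
          (∀ W ∈ G, ContDiff ℝ (⊤ : ℕ∞) W) ∧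
          Dbar0 lam μ k ∈ G ∧ (∀ j : Fin n, DbarJ μ S j ∈ G) ∧
          (∀ V ∈ G, ∀ W ∈ G, V + W ∈ G) ∧
          (∀ (a : ℝ), ∀ V ∈ G, a • V ∈ G) ∧
          (∀ V ∈ G, ∀ W ∈ G, lieBracketT V W ∈ G)})) = ⊤ := by
  have h2 : Real.sqrt 2 ≠ 0 := by positivity
  intro x
  set 𝔤 : Set (VFt N) := ⋂₀ {G : Set (VFt N) |
          (∀ W ∈ G, ContDiff ℝ (⊤ : ℕ∞) W) ∧
          Dbar0 lam μ k ∈ G ∧ (∀ j : Fin n, DbarJ μ S j ∈ G) ∧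
          (∀ V ∈ G, ∀ W ∈ G, V + W ∈ G) ∧
          (∀ (a : ℝ), ∀ V ∈ G, a • V ∈ G) ∧
          (∀ V ∈ G, ∀ W ∈ G, lieBracketT V W ∈ G)} with h𝔤
  have h0 : Dbar0 lam μ k ∈ 𝔤 := Set.mem_sInter.2 fun G hG => hG.2.1
  have hJ : ∀ j, DbarJ μ S j ∈ 𝔤 := fun j => Set.mem_sInter.2 fun G hG => hG.2.2.1 j
  have hsmul : ∀ (a : ℝ) (V : VFt N), V ∈ 𝔤 → a • V ∈ 𝔤 := fun a V hV =>
    Set.mem_sInter.2 fun G hG => hG.2.2.2.2.1 a V (Set.mem_sInter.1 hV G hG)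
  have hbr : ∀ (V : VFt N), V ∈ 𝔤 → ∀ (W : VFt N), W ∈ 𝔤 → lieBracketT V W ∈ 𝔤 :=
    fun V hV W hW => Set.mem_sInter.2 fun G hG =>
      hG.2.2.2.2.2 V (Set.mem_sInter.1 hV G hG) W (Set.mem_sInter.1 hW G hG)
  -- constant indicator fields are in the Lie algebra
  have key : ∀ T : Finset (Fin n), T.Nonempty →
      (fun _ : ℝ × (Fin N → ℝ) =>
        ((0 : ℝ), fun i => if T ⊆ S i then (1 : ℝ) else 0)) ∈ 𝔤 := by
    intro T hT
    induction hT using Finset.Nonempty.cons_induction with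
    | singleton j =>
      have heq : (fun _ : ℝ × (Fin N → ℝ) =>
          ((0 : ℝ), fun i => if ({j} : Finset (Fin n)) ⊆ S i then (1 : ℝ) else 0)) =
          (-(Real.sqrt 2)/(μ*lam)) • lieBracketT (DbarJ μ S j) (Dbar0 lam μ k) := by
        rw [brJ0]
        funext y
        simp only [Pi.smul_apply, Prod.smul_mk, smul_eq_mul, smul_zero]
        refine Prod.ext (by simp) (funext fun i => ?_)
        simp only [Pi.smul_apply, smul_eq_mul, Finset.singleton_subset_iff]
        split_ifs with h
        · field_simp
        · simp
      rw [heq]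
      exact hsmul _ _ (hbr _ (hJ j) _ h0)
    | cons l T hl hT ih =>
      have heq : (fun _ : ℝ × (Fin N → ℝ) =>
          ((0 : ℝ), fun i => if Finset.cons l T hl ⊆ S i then (1 : ℝ) else 0)) =
          (Real.sqrt 2/μ) • lieBracketT
            (fun _ : ℝ × (Fin N → ℝ) =>
              (((0 : ℝ), fun i => if T ⊆ S i then (1 : ℝ) else 0) : ℝ × (Fin N → ℝ)))
            (DbarJ μ S l) := by
        rw [brConstJ μ S l (((0 : ℝ), fun i => if T ⊆ S i then (1 : ℝ) else 0) : ℝ × (Fin N → ℝ))]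
        funext y
        simp only [Pi.smul_apply, Prod.smul_mk, smul_eq_mul, smul_zero]
        refine Prod.ext (by simp) (funext fun i => ?_)
        simp only [Pi.smul_apply, smul_eq_mul, Finset.cons_subset]
        by_cases h1 : l ∈ S i <;> by_cases h3 : T ⊆ S i <;>
          simp [h1, h3] <;> field_simp
      rw [heq]
      exact hsmul _ _ (hbr _ ih _ (hJ l))
  -- delta: S i0 ⊆ S i ↔ i = i0
  have hδ : ∀ i0 i : Fin N, S i0 ⊆ S i ↔ i = i0 := by
    intro i0 i
    constructor
    · intro hsub
      have := Finset.eq_of_subset_of_card_le hsub (by rw [hScard, hScard])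
      exact (hSinj this).symm
    · rintro rfl; exact Finset.Subset.refl _
  rw [eq_top_iff]
  rintro ⟨s, v⟩ -
  have hv : ((s, v) : ℝ × (Fin N → ℝ)) =
      (-s) • (Dbar0 lam μ k x) +
      ∑ i0 : Fin N, (v i0 + s * Dfield0 lam μ k x.2 i0) •
        (((0 : ℝ), fun i => if S i0 ⊆ S i then (1 : ℝ) else 0) : ℝ × (Fin N → ℝ)) := by
    refine Prod.ext ?_ (funext fun i => ?_)
    · simp [Dbar0, Prod.fst_sum]
    · simp only [Prod.snd_add, Pi.add_apply, Prod.snd_sum, Finset.sum_apply,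
        Prod.smul_mk, Prod.smul_snd, Pi.smul_apply, smul_eq_mul, Dbar0, hδ,
        mul_ite, mul_one, mul_zero, Finset.sum_ite_eq, Finset.mem_univ, if_true]
      ring
  rw [hv]
  refine add_mem (Submodule.smul_mem _ _ (Submodule.subset_span ⟨Dbar0 lam μ k, h0, rfl⟩))
    (Submodule.sum_mem _ fun i0 _ => Submodule.smul_mem _ _ (Submodule.subset_span
      ⟨_, key (S i0) (Finset.card_pos.1 (by rw [hScard]; exact hk)), rfl⟩))
end
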